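/- Let n be a positive integer and ε ≠ 0. Suppose φ : ℝ → ℝ is three times differentiable and satisfies the ODE ε φ'''(ω) + (φ(ω)ⁿ − ω/3) φ'(ω) + (1/(3n)) φ(ω) = 0 for all ω ∈ ℝ. Then u(t,x) = e^(t/(3n)) φ( x e^(−t/3) ) satisfies u_t + uⁿ u_x + ε e^t u_{xxx} = 0 for all (t,x) ∈ ℝ × ℝ. -/

import Mathlib

/-- Partial derivative in `t` of `u = u(t,x)`. -/
noncomputable def pt (u : ℝ → ℝ → ℝ) (t x : ℝ) : ℝ := deriv (fun s => u s x) t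
/-- Partial derivative in `x` of `u = u(t,x)`. -/
noncomputable def px (u : ℝ → ℝ → ℝ) (t x : ℝ) : ℝ := deriv (fun y => u t y) x
/-- Third partial derivative in `x` of `u = u(t,x)`. -/
noncomputable def pxxx (u : ℝ → ℝ → ℝ) (t x : ℝ) : ℝ := iteratedDeriv 3 (fun y => u t y) x

private lemma scale_deriv (g : ℝ → ℝ) (hg : Differentiable ℝ g) (c k : ℝ) :
    deriv (fun y : ℝ => c * g (y * k)) = fun y : ℝ => c * k * deriv g (y * k) := by
  funext y
  have h1 : HasDerivAt (fun y : ℝ => y * k) k y := by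
    simpa using (hasDerivAt_id y).mul_const k
  have h2 : HasDerivAt (fun y : ℝ => g (y * k)) (deriv g (y * k) * k) y :=
    (hg (y * k)).hasDerivAt.comp y h1
  have h3 := h2.const_mul c
  rw [h3.deriv]; ring

/-- Case 3 of Table 4: a solution of the reduced ODE
`ε φ''' + (φⁿ − ω/3) φ' + (1/(3n)) φ = 0` gives, via the ansatz
`u = e^{t/(3n)} φ(x e^{−t/3})`, a solution of `u_t + uⁿ u_x + ε e^t u_{xxx} = 0`. -/
theorem stmt_9 (n : ℕ) (hn : 0 < n) (ε : ℝ) (hε : ε ≠ 0)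
    (φ : ℝ → ℝ) (hφ1 : Differentiable ℝ φ) (hφ2 : Differentiable ℝ (deriv φ))
    (hφ3 : Differentiable ℝ (deriv (deriv φ)))
    (hode : ∀ ω : ℝ, ε * deriv (deriv (deriv φ)) ω
      + (φ ω ^ n - ω / 3) * deriv φ ω + 1 / (3 * (n:ℝ)) * φ ω = 0)
    (u : ℝ → ℝ → ℝ)
    (hu : ∀ t x, u t x = Real.exp (t / (3 * (n:ℝ))) * φ (x * Real.exp (-t / 3))) :
    ∀ t x : ℝ,
      pt u t x + (u t x) ^ n * px u t x + ε * Real.exp t * pxxx u t x = 0 := by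
  intro t x
  have hn' : (n : ℝ) ≠ 0 := Nat.cast_ne_zero.mpr hn.ne'
  set c : ℝ := Real.exp (t / (3 * (n:ℝ))) with hc
  set k : ℝ := Real.exp (-t / 3) with hk
  set ω : ℝ := x * k with hω
  -- px
  have hpx : px u t x = c * k * deriv φ ω := by
    have : (fun y => u t y) = fun y : ℝ => c * φ (y * k) := by
      funext y; rw [hu]
    rw [px, this, scale_deriv φ hφ1 c k]
  -- pxxx
  have hpxxx : pxxx u t x = c * k ^ 3 * deriv (deriv (deriv φ)) ω := by
    have h0 : (fun y => u t y) = fun y : ℝ => c * φ (y * k) := by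
      funext y; rw [hu]
    rw [pxxx, h0, iteratedDeriv_succ, iteratedDeriv_succ, iteratedDeriv_succ,
      iteratedDeriv_zero, scale_deriv φ hφ1 c k, scale_deriv (deriv φ) hφ2 (c * k) k,
      scale_deriv (deriv (deriv φ)) hφ3 (c * k * k) k]
    ring
  -- pt
  have hpt : pt u t x = c * (1 / (3 * (n:ℝ))) * φ ω + c * (deriv φ ω * (ω * (-1/3))) := by
    have hin1 : HasDerivAt (fun s : ℝ => s / (3 * (n:ℝ))) (1 / (3 * (n:ℝ))) t := by
      simpa using (hasDerivAt_id t).div_const (3 * (n:ℝ))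
    have h1 : HasDerivAt (fun s : ℝ => Real.exp (s / (3 * (n:ℝ))))
        (c * (1 / (3 * (n:ℝ)))) t := by
      simpa [hc, mul_comm, Function.comp_def] using (Real.hasDerivAt_exp (t / (3 * (n:ℝ)))).comp t hin1
    have hin2 : HasDerivAt (fun s : ℝ => -s / 3) (-1/3) t := by
      simpa [neg_div] using ((hasDerivAt_id t).neg.div_const 3)
    have h2 : HasDerivAt (fun s : ℝ => Real.exp (-s / 3)) (k * (-1/3)) t := by
      simpa [hk, mul_comm, Function.comp_def] using (Real.hasDerivAt_exp (-t / 3)).comp t hin2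
    have h3 : HasDerivAt (fun s : ℝ => x * Real.exp (-s / 3)) (x * (k * (-1/3))) t :=
      h2.const_mul x
    have h4 : HasDerivAt (fun s : ℝ => φ (x * Real.exp (-s / 3)))
        (deriv φ ω * (x * (k * (-1/3)))) t := (hφ1 ω).hasDerivAt.comp t h3
    have h5 := h1.mul h4
    have heq : (fun s => u s x) = fun s : ℝ => Real.exp (s / (3 * (n:ℝ))) * φ (x * Real.exp (-s / 3)) := by
      funext s; rw [hu]
    rw [pt, heq, HasDerivAt.deriv (f := fun s : ℝ => Real.exp (s / (3 * (n:ℝ))) * φ (x * Real.exp (-s / 3))) h5]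
    simp only [hω]
    ring
  -- powers of exponentials
  have hcn : c ^ n = Real.exp (t / 3) := by
    rw [hc, ← Real.exp_nat_mul]
    congr 1
    field_simp
  have hk3 : k ^ 3 = Real.exp (-t) := by
    rw [hk, ← Real.exp_nat_mul]
    push_cast; ring_nf
  have hu' : u t x = c * φ ω := by rw [hu]
  rw [hpt, hpx, hpxxx, hu', mul_pow, hcn, hk3]
  have he1 : Real.exp (t / 3) * k = 1 := by
    rw [hk, ← Real.exp_add, show t / 3 + -t / 3 = 0 by ring, Real.exp_zero]
  have he2 : Real.exp t * Real.exp (-t) = 1 := by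
    rw [← Real.exp_add]; simp
  have key := hode ω
  calc c * (1 / (3 * (n:ℝ))) * φ ω + c * (deriv φ ω * (ω * (-1/3)))
        + Real.exp (t/3) * φ ω ^ n * (c * k * deriv φ ω)
        + ε * Real.exp t * (c * Real.exp (-t) * deriv (deriv (deriv φ)) ω)
      = c * ((ε * Real.exp t * Real.exp (-t)) * deriv (deriv (deriv φ)) ω
          + ((Real.exp (t/3) * k) * φ ω ^ n - ω / 3) * deriv φ ω
          + 1 / (3 * (n:ℝ)) * φ ω) := by ring
    _ = c * (ε * deriv (deriv (deriv φ)) ω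
          + (φ ω ^ n - ω / 3) * deriv φ ω + 1 / (3 * (n:ℝ)) * φ ω) := by
        rw [he1, mul_assoc ε, he2]; ring
    _ = 0 := by rw [key, mul_zero]
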